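/- arXiv:2210.02366 — 5 statements merged into one kernel-verified Lean document; each statement's English description precedes it below -/
import Mathlib

section
/- Suppose each tie set 𝓔_j has Lebesgue measure zero, j = 1,…,n. Then the optimal domains D_1*,…,D_n* minimize the loss: for every family of measurable sets D_1,…,D_n ⊆ Ω that forms an admissible partition, 𝓛(D_1*,…,D_n*) ≤ 𝓛(D_1,…,D_n). -/
open MeasureTheory

/-- If each tie set `𝓔_j` has Lebesgue measure zero, then the optimal
domains `D_j*` minimize the loss among all admissible partitions. -/
theorem optimal_domains_minimize_loss
    (n m : ℕ) (hn : 2 ≤ n) (hm : 1 ≤ m)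
    (Ω : Set (Fin m → ℝ)) (hΩ : MeasurableSet Ω)
    (P : Fin n → (Fin m → ℝ) → ℝ)
    (hPmeas : ∀ j, Measurable (P j))
    (hPnonneg : ∀ j r, 0 ≤ P j r)
    (hPsupp : ∀ j r, r ∉ Ω → P j r = 0)
    (hPone : ∀ j, ∫ r in Ω, P j r = 1)
    (q : Fin n → ℝ) (hq : ∀ j, 0 ≤ q j) (hqsum : ∑ j, q j = 1)
    (Dstar : Fin n → Set (Fin m → ℝ))
    (hDstar : ∀ j, Dstar j =
      {r | r ∈ Ω ∧ ∀ k, k ≠ j → q k * P k r < q j * P j r})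
    (E : Fin n → Set (Fin m → ℝ))
    (hE : ∀ j, E j = ⋃ (k : Fin n) (_ : k ≠ j),
      {r | r ∈ Ω ∧ q k * P k r = q j * P j r ∧ ∀ i, q i * P i r ≤ q j * P j r})
    (hEnull : ∀ j, volume (E j) = 0) :
    ∀ D : Fin n → Set (Fin m → ℝ),
      (∀ j, MeasurableSet (D j)) →
      (∀ j, D j ⊆ Ω) →
      (∀ ℓ, ∫ r in ⋃ k, D k, P ℓ r = 1) →
      (∀ j k, j ≠ k → ∀ ℓ, ∫ r in D j ∩ D k, P ℓ r = 0) →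
      ∑ j, q j * ∫ r in Ω \ Dstar j, P j r ≤
        ∑ j, q j * ∫ r in Ω \ D j, P j r := by
  intro D hDmeas hDsub hDunion hDdisj
  have hnone : (Finset.univ : Finset (Fin n)).Nonempty :=
    ⟨⟨0, by omega⟩, Finset.mem_univ _⟩
  set g : Fin n → (Fin m → ℝ) → ℝ := fun j r => q j * P j r with hgdef
  have hgmeas : ∀ j, Measurable (g j) := fun j => (hPmeas j).const_mul (q j)
  have hgnonneg : ∀ j r, 0 ≤ g j r := fun j r => mul_nonneg (hq j) (hPnonneg j r)
  -- integrability of the densities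
  have hPint : ∀ j, IntegrableOn (P j) Ω := by
    intro j
    by_contra h
    have := hPone j
    rw [integral_undef h] at this
    norm_num at this
  have hgint : ∀ j, IntegrableOn (g j) Ω := fun j => (hPint j).const_mul (q j)
  -- the pointwise maximum
  set M : (Fin m → ℝ) → ℝ := Finset.univ.sup' hnone g with hMdef
  have hMapp : ∀ r, M r = Finset.univ.sup' hnone (fun j => g j r) := by
    intro r; rw [hMdef, Finset.sup'_apply]
  have hle : ∀ j r, g j r ≤ M r := by
    intro j r; rw [hMapp]; exact Finset.le_sup' (fun i => g i r) (Finset.mem_univ j)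
  have hMnonneg : ∀ r, 0 ≤ M r := fun r =>
    le_trans (hgnonneg ⟨0, by omega⟩ r) (hle _ r)
  have hMmeas : Measurable M := by
    rw [hMdef]; exact Finset.measurable_sup' hnone fun j _ => hgmeas j
  have hMle_sum : ∀ r, M r ≤ ∑ j, g j r := by
    intro r; rw [hMapp]
    exact Finset.sup'_le _ _ fun j _ =>
      Finset.single_le_sum (fun i _ => hgnonneg i r) (Finset.mem_univ j)
  have hsumint : IntegrableOn (fun r => ∑ j, g j r) Ω :=
    integrable_finset_sum _ fun j _ => hgint j
  have hMint : IntegrableOn M Ω := by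
    refine Integrable.mono' hsumint
      hMmeas.aestronglyMeasurable (ae_of_all _ fun r => ?_)
    rw [Real.norm_eq_abs, abs_of_nonneg (hMnonneg r)]
    exact hMle_sum r
  -- the measure with density M
  set μ : Measure (Fin m → ℝ) := volume.withDensity (fun r => ENNReal.ofReal (M r))
    with hμdef
  have hμA : ∀ A : Set (Fin m → ℝ), MeasurableSet A → A ⊆ Ω →
      μ A = ENNReal.ofReal (∫ r in A, M r) := by
    intro A hA hAΩ
    rw [hμdef, withDensity_apply _ hA,
      ← ofReal_integral_eq_lintegral_ofReal (hMint.mono_set hAΩ)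
        (ae_of_all _ fun r => hMnonneg r)]
  have hμtoReal : ∀ A : Set (Fin m → ℝ), MeasurableSet A → A ⊆ Ω →
      (μ A).toReal = ∫ r in A, M r := by
    intro A hA hAΩ
    rw [hμA A hA hAΩ, ENNReal.toReal_ofReal (setIntegral_nonneg hA fun r _ => hMnonneg r)]
  -- Dstar is measurable
  have hDstarsub : ∀ j, Dstar j ⊆ Ω := by
    intro j r hr; rw [hDstar j] at hr; exact hr.1
  have hDstarmeas : ∀ j, MeasurableSet (Dstar j) := by
    intro j
    have heq : Dstar j = Ω ∩ ⋂ k, {r | k ≠ j → q k * P k r < q j * P j r} := by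
      rw [hDstar j]; ext r; simp [Set.mem_iInter]
    rw [heq]
    refine hΩ.inter (MeasurableSet.iInter fun k => ?_)
    by_cases hkj : k = j
    · simp [hkj]
    · have : {r | k ≠ j → q k * P k r < q j * P j r}
          = {r | q k * P k r < q j * P j r} := by
        ext r; simp [hkj]
      rw [this]
      exact measurableSet_lt (hgmeas k) (hgmeas j)
  have hDstardisj : Pairwise (Function.onFun Disjoint Dstar) := by
    intro j k hjk
    rw [Function.onFun, Set.disjoint_left]
    intro r hrj hrk
    rw [hDstar j] at hrj; rw [hDstar k] at hrk
    have h1 := hrj.2 k (Ne.symm hjk)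
    have h2 := hrk.2 j hjk
    linarith
  -- on Dstar j, M = g j
  have hMeqg : ∀ j, ∀ r ∈ Dstar j, M r = g j r := by
    intro j r hr
    rw [hDstar j] at hr
    refine le_antisymm ?_ (hle j r)
    rw [hMapp]
    refine Finset.sup'_le _ _ fun k _ => ?_
    by_cases hkj : k = j
    · rw [hkj]
    · exact le_of_lt (hr.2 k hkj)
  -- the complement of the union of the Dstar's inside Ω lies in the ties
  have hcover : Ω \ (⋃ j, Dstar j) ⊆ ⋃ j, E j := by
    rintro r ⟨hrΩ, hrn⟩
    obtain ⟨j, -, hj⟩ := Finset.exists_mem_eq_sup' hnone fun i => g i r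
    have hMj : M r = g j r := by rw [hMapp]; exact hj
    have hrj : r ∉ Dstar j := fun h => hrn (Set.mem_iUnion.2 ⟨j, h⟩)
    rw [hDstar j] at hrj
    simp only [Set.mem_setOf_eq] at hrj
    push_neg at hrj
    obtain ⟨k, hkj, hk⟩ := hrj hrΩ
    have hkeq : q k * P k r = q j * P j r :=
      le_antisymm ((hle k r).trans hMj.le) hk
    refine Set.mem_iUnion.2 ⟨j, ?_⟩
    rw [hE j]
    exact Set.mem_iUnion.2 ⟨k, Set.mem_iUnion.2
      ⟨hkj, hrΩ, hkeq, fun i => (hle i r).trans hMj.le⟩⟩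
  have hdiffnull : μ (Ω \ ⋃ j, Dstar j) = 0 := by
    refine measure_mono_null hcover ?_
    exact (withDensity_absolutelyContinuous volume _) (measure_iUnion_null hEnull)
  -- μ Ω = μ (⋃ Dstar)
  have hμΩ : μ Ω = μ (⋃ j, Dstar j) := by
    refine le_antisymm ?_ (measure_mono (Set.iUnion_subset hDstarsub))
    calc μ Ω ≤ μ ((⋃ j, Dstar j) ∪ (Ω \ ⋃ j, Dstar j)) := by
          refine measure_mono fun r hr => ?_
          by_cases h : r ∈ ⋃ j, Dstar j
          · exact Or.inl h
          · exact Or.inr ⟨hr, h⟩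
      _ ≤ μ (⋃ j, Dstar j) + μ (Ω \ ⋃ j, Dstar j) := measure_union_le _ _
      _ = μ (⋃ j, Dstar j) := by rw [hdiffnull, add_zero]
  -- the D's are a.e. disjoint for μ
  have hinter0 : ∀ j k, j ≠ k → μ (D j ∩ D k) = 0 := by
    intro j k hjk
    have hsub : D j ∩ D k ⊆ Ω := fun r hr => hDsub j hr.1
    have hms : MeasurableSet (D j ∩ D k) := (hDmeas j).inter (hDmeas k)
    have h0 : ∫ r in D j ∩ D k, M r = 0 := by
      refine le_antisymm ?_ (setIntegral_nonneg hms fun r _ => hMnonneg r)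
      calc ∫ r in D j ∩ D k, M r ≤ ∫ r in D j ∩ D k, ∑ ℓ, g ℓ r := by
            refine setIntegral_mono_on (hMint.mono_set hsub)
              (hsumint.mono_set hsub) hms
              fun r _ => hMle_sum r
        _ = ∑ ℓ, ∫ r in D j ∩ D k, g ℓ r :=
            integral_finset_sum _ fun ℓ _ => (hgint ℓ).mono_set hsub
        _ = ∑ ℓ, q ℓ * ∫ r in D j ∩ D k, P ℓ r := by
            refine Finset.sum_congr rfl fun ℓ _ => ?_
            rw [hgdef]; exact integral_const_mul (q ℓ) (P ℓ)
        _ = 0 := by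
            refine Finset.sum_eq_zero fun ℓ _ => ?_
            rw [hDdisj j k hjk ℓ, mul_zero]
    rw [hμA _ hms hsub, h0, ENNReal.ofReal_zero]
  have hμD : μ (⋃ j, D j) = ∑ j, μ (D j) := by
    rw [measure_iUnion₀ (fun j k hjk => hinter0 j k hjk)
      (fun j => (hDmeas j).nullMeasurableSet), tsum_fintype]
  have hμDstar : μ (⋃ j, Dstar j) = ∑ j, μ (Dstar j) := by
    rw [measure_iUnion hDstardisj hDstarmeas, tsum_fintype]
  have hμΩfin : μ Ω ≠ ⊤ := by
    rw [hμA Ω hΩ subset_rfl]; exact ENNReal.ofReal_ne_top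
  have hfin : ∀ A : Set (Fin m → ℝ), MeasurableSet A → A ⊆ Ω → μ A ≠ ⊤ :=
    fun A hA hAΩ => by rw [hμA A hA hAΩ]; exact ENNReal.ofReal_ne_top
  -- the central inequality
  have hmain : ∑ j, ∫ r in D j, g j r ≤ ∑ j, ∫ r in Dstar j, g j r := by
    calc ∑ j, ∫ r in D j, g j r ≤ ∑ j, ∫ r in D j, M r := by
          refine Finset.sum_le_sum fun j _ => ?_
          exact setIntegral_mono_on ((hgint j).mono_set (hDsub j))
            (hMint.mono_set (hDsub j)) (hDmeas j) fun r _ => hle j r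
      _ = ∑ j, (μ (D j)).toReal := by
          refine Finset.sum_congr rfl fun j _ => ?_
          rw [hμtoReal _ (hDmeas j) (hDsub j)]
      _ = (∑ j, μ (D j)).toReal :=
          (ENNReal.toReal_sum fun j _ => hfin _ (hDmeas j) (hDsub j)).symm
      _ = (μ (⋃ j, D j)).toReal := by rw [hμD]
      _ ≤ (μ Ω).toReal :=
          ENNReal.toReal_mono hμΩfin (measure_mono (Set.iUnion_subset hDsub))
      _ = (∑ j, μ (Dstar j)).toReal := by rw [hμΩ, hμDstar]
      _ = ∑ j, (μ (Dstar j)).toReal :=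
          ENNReal.toReal_sum fun j _ => hfin _ (hDstarmeas j) (hDstarsub j)
      _ = ∑ j, ∫ r in Dstar j, M r := by
          refine Finset.sum_congr rfl fun j _ => ?_
          exact hμtoReal _ (hDstarmeas j) (hDstarsub j)
      _ = ∑ j, ∫ r in Dstar j, g j r := by
          refine Finset.sum_congr rfl fun j _ => ?_
          exact setIntegral_congr_fun (hDstarmeas j) fun r hr => hMeqg j r hr
  -- rewrite the losses
  have hloss : ∀ (A : Fin n → Set (Fin m → ℝ)), (∀ j, MeasurableSet (A j)) →
      (∀ j, A j ⊆ Ω) →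
      ∑ j, q j * ∫ r in Ω \ A j, P j r = ∑ j, (q j - ∫ r in A j, g j r) := by
    intro A hAmeas hAsub
    refine Finset.sum_congr rfl fun j _ => ?_
    rw [integral_diff (hAmeas j) (hPint j) (hAsub j), hPone j, mul_sub, mul_one]
    congr 1
    rw [hgdef]
    exact (integral_const_mul (q j) (P j)).symm
  rw [hloss Dstar hDstarmeas hDstarsub, hloss D hDmeas hDsub,
    Finset.sum_sub_distrib, Finset.sum_sub_distrib]
  linarith
end

section
/- Let D̂_1,…,D̂_n be measurable sets that partition Ω exactly (pairwise disjoint with union Ω) and satisfy D̂_j ⊆ {r ∈ Ω : q_j P_j(r) ≥ q_k P_k(r) for all k} for every j (i.e., every point is assigned to a class of maximal weighted density). Then 𝓛(D̂_1,…,D̂_n) ≤ 𝓛(D_1,…,D_n) for every family of measurable sets D_1,…,D_n ⊆ Ω forming an admissible partition. In particular, even when the tie sets 𝓔_j have positive measure, any assignment of tie points to classes achieving the maximum yields minimal loss. -/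
open MeasureTheory

/-- Any exact partition assigning each point to a class of maximal weighted
density minimizes the loss among all admissible partitions (even when tie sets have
positive measure). -/
theorem max_density_partition_minimizes_loss
    (n m : ℕ) (hn : 2 ≤ n) (hm : 1 ≤ m)
    (Ω : Set (Fin m → ℝ)) (hΩ : MeasurableSet Ω)
    (P : Fin n → (Fin m → ℝ) → ℝ)
    (hPmeas : ∀ j, Measurable (P j))
    (hPnonneg : ∀ j r, 0 ≤ P j r)
    (hPsupp : ∀ j r, r ∉ Ω → P j r = 0)
    (hPone : ∀ j, ∫ r in Ω, P j r = 1)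
    (q : Fin n → ℝ) (hq : ∀ j, 0 ≤ q j) (hqsum : ∑ j, q j = 1)
    (Dhat : Fin n → Set (Fin m → ℝ))
    (hDhatMeas : ∀ j, MeasurableSet (Dhat j))
    (hDhatDisj : ∀ j k, j ≠ k → Dhat j ∩ Dhat k = ∅)
    (hDhatUnion : ⋃ j, Dhat j = Ω)
    (hDhatMax : ∀ j, Dhat j ⊆ {r | r ∈ Ω ∧ ∀ k, q k * P k r ≤ q j * P j r}) :
    ∀ D : Fin n → Set (Fin m → ℝ),
      (∀ j, MeasurableSet (D j)) →
      (∀ j, D j ⊆ Ω) →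
      (∀ ℓ, ∫ r in ⋃ k, D k, P ℓ r = 1) →
      (∀ j k, j ≠ k → ∀ ℓ, ∫ r in D j ∩ D k, P ℓ r = 0) →
      ∑ j, q j * ∫ r in Ω \ Dhat j, P j r ≤
        ∑ j, q j * ∫ r in Ω \ D j, P j r := by
  intro D hDmeas hDsub hDone hDzero
  haveI : NeZero n := ⟨by omega⟩
  have hne : (Finset.univ : Finset (Fin n)).Nonempty := Finset.univ_nonempty
  -- weighted densities
  set g : Fin n → (Fin m → ℝ) → ℝ := fun j r => q j * P j r with hg
  have hgmeas : ∀ j, Measurable (g j) := fun j => (hPmeas j).const_mul (q j)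
  have hgnn : ∀ j r, 0 ≤ g j r := fun j r => mul_nonneg (hq j) (hPnonneg j r)
  -- max density
  set f : (Fin m → ℝ) → ℝ := fun r => Finset.univ.sup' hne (fun j => g j r) with hf
  have hfmeas : Measurable f := by
    have := Finset.measurable_sup' hne (fun j _ => hgmeas j)
    convert this using 1
    funext r
    exact (Finset.sup'_apply hne g r).symm
  have hglef : ∀ j r, g j r ≤ f r := fun j r => Finset.le_sup' (fun k => g k r) (Finset.mem_univ j)
  have hfnn : ∀ r, 0 ≤ f r := fun r => le_trans (hgnn 0 r) (hglef 0 r)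
  have hfbound : ∀ r, f r ≤ ∑ j, g j r := fun r =>
    Finset.sup'_le _ _ fun j _ => Finset.single_le_sum (fun k _ => hgnn k r) (Finset.mem_univ j)
  -- integrability
  have hPint : ∀ j, IntegrableOn (P j) Ω := by
    intro j
    by_contra h
    have h1 := hPone j
    rw [integral_undef h] at h1
    exact one_ne_zero h1.symm
  have hgint : ∀ j, IntegrableOn (g j) Ω := fun j => (hPint j).const_mul (q j)
  have hfint : IntegrableOn f Ω := by
    refine Integrable.mono' (integrable_finset_sum Finset.univ fun j _ => hgint j)
      (hfmeas.aestronglyMeasurable) ?_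
    filter_upwards with r
    rw [Real.norm_eq_abs, abs_of_nonneg (hfnn r)]
    exact hfbound r
  have hfintS : ∀ S : Set (Fin m → ℝ), S ⊆ Ω → IntegrableOn f S :=
    fun S hS => hfint.mono_set hS
  have hgintS : ∀ j, ∀ S : Set (Fin m → ℝ), S ⊆ Ω → IntegrableOn (g j) S :=
    fun j S hS => (hgint j).mono_set hS
  -- complement integral formula
  have hcompl : ∀ j, ∀ E : Set (Fin m → ℝ), MeasurableSet E → E ⊆ Ω →
      q j * ∫ r in Ω \ E, P j r = q j - ∫ r in E, g j r := by
    intro j E hEm hEs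
    have hsplit : ∫ r in Ω, g j r = (∫ r in E, g j r) + ∫ r in Ω \ E, g j r := by
      rw [← setIntegral_union Set.disjoint_sdiff_right (hΩ.diff hEm)
        (hgintS j E hEs) ((hgint j).mono_set Set.diff_subset),
        Set.union_diff_cancel hEs]
    have h1 : ∫ r in Ω, g j r = q j := by
      simp only [hg, integral_const_mul, hPone j, mul_one]
    have h2 : ∫ r in Ω \ E, g j r = q j * ∫ r in Ω \ E, P j r := by
      simp only [hg, integral_const_mul]
    linarith
  have hDhatSub : ∀ j, Dhat j ⊆ Ω := fun j r hr => (hDhatMax j hr).1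
  -- rewrite goal
  rw [Finset.sum_congr rfl fun j _ => hcompl j (Dhat j) (hDhatMeas j) (hDhatSub j),
    Finset.sum_congr rfl fun j _ => hcompl j (D j) (hDmeas j) (hDsub j),
    Finset.sum_sub_distrib, Finset.sum_sub_distrib]
  refine sub_le_sub_left ?_ _
  -- ∑ ∫_{D j} g j ≤ ∑ ∫_{Dhat j} g j
  -- RHS = ∫_Ω f
  have hDhatEq : ∀ j, ∫ r in Dhat j, g j r = ∫ r in Dhat j, f r := by
    intro j
    refine setIntegral_congr_fun (hDhatMeas j) fun r hr => ?_
    exact le_antisymm (hglef j r) (Finset.sup'_le _ _ fun k _ => (hDhatMax j hr).2 k)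
  have hRHS : ∑ j, ∫ r in Dhat j, g j r = ∫ r in Ω, f r := by
    rw [Finset.sum_congr rfl fun j _ => hDhatEq j, ← hDhatUnion,
      integral_iUnion_fintype hDhatMeas
        (fun i j hij => Set.disjoint_iff_inter_eq_empty.2 (hDhatDisj i j hij))
        (fun i => hfintS _ (hDhatSub i))]
  rw [hRHS]
  -- disjointified D
  set D' : Fin n → Set (Fin m → ℝ) := fun j => D j \ ⋃ (k : Fin n) (_ : k < j), D k with hD'
  have hD'meas : ∀ j, MeasurableSet (D' j) :=
    fun j => (hDmeas j).diff (MeasurableSet.iUnion fun k => MeasurableSet.iUnion fun _ => hDmeas k)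
  have hD'sub : ∀ j, D' j ⊆ D j := fun j => Set.diff_subset
  have hD'disj : Pairwise (Function.onFun Disjoint D') := by
    intro i j hij
    have key : ∀ a b : Fin n, a < b → Disjoint (D' a) (D' b) := by
      intro a b hab
      rw [Set.disjoint_left]
      intro r hra hrb
      exact hrb.2 (Set.mem_iUnion.2 ⟨a, Set.mem_iUnion.2 ⟨hab, hra.1⟩⟩)
    rcases hij.lt_or_gt with h | h
    · exact key i j h
    · exact (key j i h).symm
  -- f is a.e. zero on overlaps
  have hBadNull : ∀ j k : Fin n, j ≠ k → (volume : Measure (Fin m → ℝ))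
      ((D j ∩ D k) ∩ {r | f r ≠ 0}) = 0 := by
    intro j k hjk
    have hPnull : ∀ ℓ, (volume : Measure (Fin m → ℝ)) ((D j ∩ D k) ∩ {r | P ℓ r ≠ 0}) = 0 := by
      intro ℓ
      have hm' : MeasurableSet (D j ∩ D k) := (hDmeas j).inter (hDmeas k)
      have hint : IntegrableOn (P ℓ) (D j ∩ D k) :=
        (hPint ℓ).mono_set (fun r hr => hDsub j hr.1)
      have := (integral_eq_zero_iff_of_nonneg (μ := volume.restrict (D j ∩ D k))
        (fun r => hPnonneg ℓ r) hint).1 (hDzero j k hjk ℓ)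
      have h0 : (volume.restrict (D j ∩ D k)) {r | P ℓ r ≠ 0} = 0 := by
        have := this
        rw [Filter.EventuallyEq, ae_iff] at this
        simpa using this
      have hms : MeasurableSet {r : Fin m → ℝ | P ℓ r ≠ 0} :=
        ((hPmeas ℓ) (measurableSet_singleton (0:ℝ))).compl
      rw [Measure.restrict_apply hms] at h0
      rw [Set.inter_comm]
      exact h0
    have hsub : (D j ∩ D k) ∩ {r | f r ≠ 0} ⊆ ⋃ ℓ, (D j ∩ D k) ∩ {r | P ℓ r ≠ 0} := by
      intro r hr
      have hfr : f r ≠ 0 := hr.2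
      have : ∃ ℓ, g ℓ r ≠ 0 := by
        by_contra hall
        push_neg at hall
        apply hfr
        have : f r ≤ 0 := Finset.sup'_le _ _ fun ℓ _ => le_of_eq (hall ℓ)
        exact le_antisymm this (hfnn r)
      obtain ⟨ℓ, hℓ⟩ := this
      have : P ℓ r ≠ 0 := fun h => hℓ (by simp [hg, h])
      exact Set.mem_iUnion.2 ⟨ℓ, hr.1, this⟩
    exact measure_mono_null hsub (measure_iUnion_null hPnull)
  -- ∫_{D j} f = ∫_{D' j} f
  have hDeq : ∀ j, ∫ r in D j, f r = ∫ r in D' j, f r := by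
    intro j
    have hcover : D' j ∪ (D j \ D' j) = D j := Set.union_diff_cancel (hD'sub j)
    have hmd : MeasurableSet (D j \ D' j) := (hDmeas j).diff (hD'meas j)
    have hzero : ∫ r in D j \ D' j, f r = 0 := by
      have hnull : (volume : Measure (Fin m → ℝ)) ((D j \ D' j) ∩ {r | f r ≠ 0}) = 0 := by
        have hsub : (D j \ D' j) ∩ {r | f r ≠ 0} ⊆
            ⋃ (k : Fin n) (_ : k < j), (D j ∩ D k) ∩ {r | f r ≠ 0} := by
          intro r hr
          have h1 : r ∈ D j := hr.1.1
          have h2 : r ∉ D' j := hr.1.2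
          have h3 : r ∈ ⋃ (k : Fin n) (_ : k < j), D k := by
            by_contra h
            exact h2 ⟨h1, h⟩
          obtain ⟨k, hk⟩ := Set.mem_iUnion.1 h3
          obtain ⟨hklt, hrk'⟩ := Set.mem_iUnion.1 hk
          exact Set.mem_iUnion.2 ⟨k, Set.mem_iUnion.2 ⟨hklt, ⟨h1, hrk'⟩, hr.2⟩⟩
        refine measure_mono_null hsub (measure_iUnion_null fun k => measure_iUnion_null fun hk =>
          hBadNull j k (ne_of_gt hk))
      have hae : ∀ᵐ r ∂(volume.restrict (D j \ D' j)), f r = 0 := by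
        rw [ae_restrict_iff' hmd]
        rw [ae_iff]
        refine measure_mono_null ?_ hnull
        intro r hr
        simp only [Set.mem_setOf_eq, Classical.not_imp] at hr
        exact ⟨hr.1, hr.2⟩
      calc ∫ r in D j \ D' j, f r = ∫ r in D j \ D' j, (0:ℝ) := integral_congr_ae hae
        _ = 0 := integral_zero _ _
    rw [← hcover, setIntegral_union Set.disjoint_sdiff_right hmd
      (hfintS _ (fun r hr => hDsub j (hD'sub j hr)))
      (hfintS _ (fun r hr => hDsub j hr.1)), hzero, add_zero]
  calc ∑ j, ∫ r in D j, g j r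
      ≤ ∑ j, ∫ r in D j, f r := by
        refine Finset.sum_le_sum fun j _ => ?_
        exact setIntegral_mono_on (hgintS j _ (hDsub j)) (hfintS _ (hDsub j)) (hDmeas j)
          (fun r _ => hglef j r)
    _ = ∑ j, ∫ r in D' j, f r := Finset.sum_congr rfl fun j _ => hDeq j
    _ = ∫ r in ⋃ j, D' j, f r := (integral_iUnion_fintype hD'meas hD'disj
          (fun i => hfintS _ (fun r hr => hDsub i (hD'sub i hr)))).symm
    _ ≤ ∫ r in Ω, f r := by
        refine setIntegral_mono_set hfint ?_ ?_
        · filter_upwards with r using hfnn r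
        · refine HasSubset.Subset.eventuallyLE ?_
          exact Set.iUnion_subset fun j r hr => hDsub j (hD'sub j hr)
end

section
/- Suppose each tie set 𝓔_j has Lebesgue measure zero, j = 1,…,n. Then the optimal domains D_1*,…,D_n* satisfy the admissibility requirements: they are pairwise disjoint, and ∫_{∪_{k=1}^n D_k*} P_ℓ(r) dr = 1 for every ℓ ∈ {1,…,n}. -/
open MeasureTheory

/-- If each tie set has Lebesgue measure zero, the optimal domains are
pairwise disjoint and their union carries full mass for each class density. -/
theorem optimal_domains_admissible
    (n m : ℕ) (hn : 2 ≤ n) (hm : 1 ≤ m)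
    (Ω : Set (Fin m → ℝ)) (hΩ : MeasurableSet Ω)
    (P : Fin n → (Fin m → ℝ) → ℝ)
    (hPmeas : ∀ j, Measurable (P j))
    (hPnonneg : ∀ j r, 0 ≤ P j r)
    (hPsupp : ∀ j r, r ∉ Ω → P j r = 0)
    (hPone : ∀ j, ∫ r in Ω, P j r = 1)
    (q : Fin n → ℝ) (hq : ∀ j, 0 ≤ q j) (hqsum : ∑ j, q j = 1)
    (Dstar : Fin n → Set (Fin m → ℝ))
    (hDstar : ∀ j, Dstar j =
      {r | r ∈ Ω ∧ ∀ k, k ≠ j → q k * P k r < q j * P j r})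
    (E : Fin n → Set (Fin m → ℝ))
    (hE : ∀ j, E j = ⋃ (k : Fin n) (_ : k ≠ j),
      {r | r ∈ Ω ∧ q k * P k r = q j * P j r ∧ ∀ i, q i * P i r ≤ q j * P j r})
    (hEnull : ∀ j, volume (E j) = 0) :
    (∀ j k, j ≠ k → Dstar j ∩ Dstar k = ∅) ∧
      (∀ ℓ, ∫ r in ⋃ k, Dstar k, P ℓ r = 1) := by
  constructor
  · intro j k hjk
    ext r
    simp only [Set.mem_inter_iff, Set.mem_empty_iff_false, iff_false]
    rintro ⟨hj, hk⟩
    rw [hDstar j] at hj; rw [hDstar k] at hk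
    exact lt_asymm (hj.2 k (Ne.symm hjk)) (hk.2 j hjk)
  · intro ℓ
    have hDsub : (⋃ k, Dstar k) ⊆ Ω := by
      intro r hr
      obtain ⟨k, hk⟩ := Set.mem_iUnion.mp hr
      rw [hDstar k] at hk
      exact hk.1
    have hsub : Ω \ (⋃ k, Dstar k) ⊆ ⋃ j, E j := by
      rintro r ⟨hrΩ, hr⟩
      obtain ⟨j, -, hj⟩ := Finset.exists_max_image Finset.univ
        (fun i => q i * P i r) ⟨⟨0, by omega⟩, Finset.mem_univ _⟩
      have hnj : r ∉ Dstar j := fun h => hr (Set.mem_iUnion.mpr ⟨j, h⟩)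
      rw [hDstar j] at hnj
      simp only [Set.mem_setOf_eq, not_and, not_forall] at hnj
      obtain ⟨k, hkj, hk⟩ := hnj hrΩ
      have hle : q j * P j r ≤ q k * P k r := not_lt.mp (by exact fun h => hk h)
      refine Set.mem_iUnion.mpr ⟨j, ?_⟩
      rw [hE j]
      exact Set.mem_iUnion.mpr ⟨k, Set.mem_iUnion.mpr ⟨hkj,
        hrΩ, le_antisymm (hj k (Finset.mem_univ k)) hle,
        fun i => hj i (Finset.mem_univ i)⟩⟩
    have haeq : (⋃ k, Dstar k) =ᵐ[volume] Ω := by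
      rw [MeasureTheory.ae_eq_set]
      constructor
      · have : (⋃ k, Dstar k) \ Ω = ∅ := Set.diff_eq_empty.mpr hDsub
        simp [this]
      · exact measure_mono_null hsub (measure_iUnion_null hEnull)
    rw [setIntegral_congr_set haeq]
    exact hPone ℓ
end

section
/- The generalized prevalence estimates converge to the true values in mean square: if the matrix P − P_n is invertible and q̂ = (P − P_n)^{−1}(Q̂̄ − P̄_n) with Q̂̄ = (Q̂_1,…,Q̂_{n−1}), then E[‖q̂ − q̄‖₂²] ≤ ‖(P − P_n)^{−1}‖_op² · (Σ_{j=1}^{n−1} Q_j(1 − Q_j))/S, where ‖·‖_op is the operator norm; in particular E[‖q̂ − q̄‖₂²] ≤ ‖(P − P_n)^{−1}‖_op² (n−1)/(4S) → 0 as S → ∞. -/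
open MeasureTheory ProbabilityTheory

lemma euclid_norm_sq {N : ℕ} (w : Fin N → ℝ) :
    ‖((WithLp.equiv 2 (Fin N → ℝ)).symm w : EuclideanSpace ℝ (Fin N))‖ ^ 2 = ∑ j, (w j) ^ 2 := by
  rw [EuclideanSpace.norm_eq, Real.sq_sqrt (by positivity)]
  simp [WithLp.equiv_symm_apply, PiLp.toLp_apply, Real.norm_eq_abs, sq_abs]

lemma euclid_mulVec_bound {N : ℕ} (B : Matrix (Fin N) (Fin N) ℝ) (v : Fin N → ℝ) :
    ∑ k, (B.mulVec v k) ^ 2 ≤ ‖Matrix.toEuclideanCLM (𝕜 := ℝ) B‖ ^ 2 * ∑ j, (v j) ^ 2 := by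
  have h := (Matrix.toEuclideanCLM (𝕜 := ℝ) B).le_opNorm
      ((WithLp.equiv 2 (Fin N → ℝ)).symm v)
  rw [WithLp.equiv_symm_apply, Matrix.toEuclideanCLM_toLp] at h
  have h2 : ‖((WithLp.equiv 2 (Fin N → ℝ)).symm (Matrix.toLin' B v) :
      EuclideanSpace ℝ (Fin N))‖ ^ 2 ≤
      (‖Matrix.toEuclideanCLM (𝕜 := ℝ) B‖ * ‖((WithLp.equiv 2 (Fin N → ℝ)).symm v :
        EuclideanSpace ℝ (Fin N))‖) ^ 2 :=
    pow_le_pow_left₀ (norm_nonneg _) h 2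
  rw [euclid_norm_sq, mul_pow, euclid_norm_sq, Matrix.toLin'_apply] at h2
  exact h2

/-- Mean-square convergence of the prevalence estimates: if `P − P_n` is
invertible, then `E[‖q̂ − q̄‖₂²] ≤ ‖(P − P_n)⁻¹‖_op² (Σ_j Q_j(1−Q_j))/S`, and in
particular `E[‖q̂ − q̄‖₂²] ≤ ‖(P − P_n)⁻¹‖_op² (n−1)/(4S)`. -/
theorem prevalence_estimates_mean_square_convergence
    (n m : ℕ) (hn : 2 ≤ n) (hm : 1 ≤ m)
    (Ω : Set (Fin m → ℝ)) (hΩ : MeasurableSet Ω)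
    (P : Fin n → (Fin m → ℝ) → ℝ)
    (hPmeas : ∀ j, Measurable (P j))
    (hPnonneg : ∀ j r, 0 ≤ P j r)
    (hPsupp : ∀ j r, r ∉ Ω → P j r = 0)
    (hPone : ∀ j, ∫ r in Ω, P j r = 1)
    (q : Fin n → ℝ) (hq : ∀ j, 0 ≤ q j) (hqsum : ∑ j, q j = 1)
    (D : Fin n → Set (Fin m → ℝ))
    (hDmeas : ∀ j, MeasurableSet (D j))
    (hDdisj : ∀ j k, j ≠ k → D j ∩ D k = ∅)
    (hDunion : ⋃ j, D j = Ω)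
    (Qd : Fin n → ℝ)
    (hQd : ∀ j, Qd j = ∫ r in D j, (∑ k, q k * P k r))
    (Pmat : Fin n → Fin n → ℝ)
    (hPmat : ∀ j k, Pmat j k = ∫ r in D j, P k r)
    (e : Fin (n - 1) → Fin n) (he : ∀ i, (e i : ℕ) = (i : ℕ))
    (lastIdx : Fin n) (hlast : (lastIdx : ℕ) = n - 1)
    (A : Matrix (Fin (n - 1)) (Fin (n - 1)) ℝ)
    (hA : ∀ i j, A i j = Pmat (e i) (e j) - Pmat (e i) lastIdx)
    (hAinv : IsUnit A)
    (Ω₀ : Type) [MeasurableSpace Ω₀] (μ : Measure Ω₀) [IsProbabilityMeasure μ]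
    (S : ℕ) (hS : 0 < S)
    (R : Fin S → Ω₀ → (Fin m → ℝ))
    (hRmeas : ∀ i, Measurable (R i))
    (hRlaw : ∀ i, Measure.map (R i) μ =
      volume.withDensity (fun r => ENNReal.ofReal (∑ j, q j * P j r)))
    (hRindep : iIndepFun R μ)
    (Qhat : Fin n → Ω₀ → ℝ)
    (hQhat : ∀ j ω, Qhat j ω =
      (∑ i, (D j).indicator (fun _ => (1 : ℝ)) (R i ω)) / S)
    (qhat : Ω₀ → Fin (n - 1) → ℝ)
    (hqhat : ∀ ω, qhat ω =
      A⁻¹.mulVec (fun i => Qhat (e i) ω - Pmat (e i) lastIdx)) :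
    (∫ ω, (∑ k : Fin (n - 1), (qhat ω k - q (e k)) ^ 2) ∂μ ≤
        ‖Matrix.toEuclideanCLM (𝕜 := ℝ) A⁻¹‖ ^ 2 *
          ((∑ j : Fin (n - 1), Qd (e j) * (1 - Qd (e j))) / S)) ∧
      ∫ ω, (∑ k : Fin (n - 1), (qhat ω k - q (e k)) ^ 2) ∂μ ≤
        ‖Matrix.toEuclideanCLM (𝕜 := ℝ) A⁻¹‖ ^ 2 * ((n - 1) / (4 * S)) := by
  have hSne : (S : ℝ) ≠ 0 := Nat.cast_ne_zero.mpr hS.ne'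
  set Qv : (Fin m → ℝ) → ℝ := fun r => ∑ k, q k * P k r with hQvdef
  have hQvmeas : Measurable Qv :=
    Finset.measurable_sum _ fun k _ => (hPmeas k).const_mul (q k)
  have hQvnn : ∀ r, 0 ≤ Qv r := fun r =>
    Finset.sum_nonneg fun k _ => mul_nonneg (hq k) (hPnonneg k r)
  have hPint : ∀ k, IntegrableOn (P k) Ω := by
    intro k
    by_contra h
    have := hPone k
    rw [integral_undef h] at this
    exact zero_ne_one this
  have hQvint : IntegrableOn Qv Ω :=
    integrable_finset_sum _ fun k _ => ((hPint k).const_mul (q k))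
  have hDsub : ∀ d, D d ⊆ Ω := fun d => hDunion ▸ Set.subset_iUnion D d
  have hQvintD : ∀ d, IntegrableOn Qv (D d) := fun d => hQvint.mono_set (hDsub d)
  -- indicator random variables
  set X : Fin n → Fin S → Ω₀ → ℝ :=
    fun d i ω => (D d).indicator (fun _ => (1 : ℝ)) (R i ω) with hXdef
  have hindmeas : ∀ d : Fin n, Measurable ((D d).indicator (fun _ => (1 : ℝ))) :=
    fun d => measurable_const.indicator (hDmeas d)
  have hXmeas : ∀ d i, Measurable (X d i) := fun d i => (hindmeas d).comp (hRmeas i)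
  have hind01 : ∀ (d : Fin n) (r : Fin m → ℝ),
      (D d).indicator (fun _ => (1 : ℝ)) r = 0 ∨ (D d).indicator (fun _ => (1 : ℝ)) r = 1 := by
    intro d r
    by_cases h : r ∈ D d
    · right; simp [Set.indicator_of_mem h]
    · left; simp [Set.indicator_of_notMem h]
  have hXbd : ∀ d i ω, ‖X d i ω‖ ≤ 1 := by
    intro d i ω
    rcases hind01 d (R i ω) with h | h <;> simp [hXdef, h]
  have hXint : ∀ d i, Integrable (X d i) μ := fun d i =>
    (integrable_const 1).mono' (hXmeas d i).aestronglyMeasurable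
      (Filter.Eventually.of_forall (hXbd d i))
  -- expectation of indicator
  have hEX : ∀ d i, ∫ ω, X d i ω ∂μ = Qd d := by
    intro d i
    have : ∫ ω, X d i ω ∂μ = ∫ r, (D d).indicator (fun _ => (1 : ℝ)) r
        ∂(Measure.map (R i) μ) := by
      rw [integral_map (hRmeas i).aemeasurable (hindmeas d).aestronglyMeasurable]
    rw [this, hRlaw i, integral_indicator_const (1 : ℝ) (hDmeas d), smul_eq_mul,
      mul_one, measureReal_def, withDensity_apply _ (hDmeas d),
      ← ofReal_integral_eq_lintegral_ofReal (hQvintD d)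
        (Filter.Eventually.of_forall fun r => hQvnn r),
      ENNReal.toReal_ofReal (integral_nonneg fun r => hQvnn r), hQd]
  -- second moment of Qhat
  have hvar : ∀ d : Fin n,
      ∫ ω, (Qhat d ω - Qd d) ^ 2 ∂μ = Qd d * (1 - Qd d) / S := by
    intro d
    set c : ℝ := Qd d with hc
    set Y : Fin S → Ω₀ → ℝ := fun i ω => X d i ω - c with hYdef
    have hYmeas : ∀ i, Measurable (Y i) := fun i => (hXmeas d i).sub measurable_const
    have hYbd : ∀ i ω, ‖Y i ω‖ ≤ 1 + |c| := by
      intro i ω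
      calc ‖Y i ω‖ ≤ ‖X d i ω‖ + ‖c‖ := norm_sub_le _ _
        _ ≤ 1 + |c| := add_le_add (hXbd d i ω) (le_of_eq (Real.norm_eq_abs c))
    have hYint : ∀ i, Integrable (Y i) μ := fun i =>
      (integrable_const (1 + |c|)).mono' (hYmeas i).aestronglyMeasurable
        (Filter.Eventually.of_forall (hYbd i))
    have hEY : ∀ i, ∫ ω, Y i ω ∂μ = 0 := by
      intro i
      simp only [hYdef]
      rw [integral_sub (hXint d i) (integrable_const c), hEX d i, integral_const]
      simp [hc]
    have hY2 : ∀ i, ∫ ω, (Y i ω) ^ 2 ∂μ = c - c ^ 2 := by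
      intro i
      have hpt : ∀ ω, (Y i ω) ^ 2 = (1 - 2 * c) * X d i ω + c ^ 2 := by
        intro ω
        rcases hind01 d (R i ω) with h | h <;>
          simp only [hYdef, hXdef, h] <;> ring
      calc ∫ ω, (Y i ω) ^ 2 ∂μ = ∫ ω, ((1 - 2 * c) * X d i ω + c ^ 2) ∂μ := by
            exact integral_congr_ae (Filter.Eventually.of_forall hpt)
        _ = (1 - 2 * c) * (∫ ω, X d i ω ∂μ) + c ^ 2 := by
            rw [integral_add ((hXint d i).const_mul _) (integrable_const _),
              integral_const_mul, integral_const]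
            simp
        _ = c - c ^ 2 := by rw [hEX d i]; ring
    have hYprodint : ∀ i i', Integrable (fun ω => Y i ω * Y i' ω) μ := by
      intro i i'
      refine (integrable_const ((1 + |c|) * (1 + |c|))).mono'
        ((hYmeas i).mul (hYmeas i')).aestronglyMeasurable
        (Filter.Eventually.of_forall fun ω => ?_)
      rw [norm_mul]
      exact mul_le_mul (hYbd i ω) (hYbd i' ω) (norm_nonneg _) (by positivity)
    have hcross : ∀ i i', i ≠ i' → ∫ ω, Y i ω * Y i' ω ∂μ = 0 := by
      intro i i' hii
      have hRind : IndepFun (R i) (R i') μ := hRindep.indepFun hii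
      have hYind : IndepFun (Y i) (Y i') μ := by
        have := hRind.comp (φ := fun r => (D d).indicator (fun _ => (1 : ℝ)) r - c)
          (ψ := fun r => (D d).indicator (fun _ => (1 : ℝ)) r - c)
          ((hindmeas d).sub measurable_const) ((hindmeas d).sub measurable_const)
        exact this
      have := hYind.integral_mul_eq_mul_integral (hYmeas i).aestronglyMeasurable
        (hYmeas i').aestronglyMeasurable
      rw [show (Y i * Y i') = fun ω => Y i ω * Y i' ω from rfl] at this
      rw [this, hEY i, hEY i', mul_zero]
    have hQc : ∀ ω, Qhat d ω - c = (∑ i, Y i ω) / S := by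
      intro ω
      rw [hQhat]
      simp only [hYdef, hXdef, Finset.sum_sub_distrib, Finset.sum_const,
        Finset.card_univ, Fintype.card_fin, nsmul_eq_mul]
      field_simp
    have hsumsq : ∀ ω, (Qhat d ω - c) ^ 2 =
        (∑ i, ∑ i', Y i ω * Y i' ω) / (S * S) := by
      intro ω
      rw [hQc, div_pow, ← Finset.sum_mul_sum]
      ring_nf
    calc ∫ ω, (Qhat d ω - c) ^ 2 ∂μ
        = ∫ ω, (∑ i, ∑ i', Y i ω * Y i' ω) / (S * S) ∂μ :=
          integral_congr_ae (Filter.Eventually.of_forall hsumsq)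
      _ = (∑ i, ∑ i', ∫ ω, Y i ω * Y i' ω ∂μ) / (S * S) := by
          rw [integral_div]
          congr 1
          rw [integral_finset_sum _ fun i _ => integrable_finset_sum _
            fun i' _ => hYprodint i i']
          exact Finset.sum_congr rfl fun i _ =>
            integral_finset_sum _ fun i' _ => hYprodint i i'
      _ = (∑ i : Fin S, (c - c ^ 2)) / (S * S) := by
          congr 1
          refine Finset.sum_congr rfl fun i _ => ?_
          rw [Finset.sum_eq_single i]
          · have := hY2 i
            simpa [pow_two] using this
          · intro i' _ hii'; exact hcross i i' (Ne.symm hii')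
          · intro h; exact absurd (Finset.mem_univ i) h
      _ = Qd d * (1 - Qd d) / S := by
          rw [Finset.sum_const, Finset.card_univ, Fintype.card_fin, nsmul_eq_mul]
          field_simp
          ring
  -- index splitting
  have he_inj : Function.Injective e := by
    intro a b hab
    have : (a : ℕ) = (b : ℕ) := by rw [← he a, ← he b, hab]
    exact Fin.ext this
  have he_ne : ∀ i, e i ≠ lastIdx := by
    intro i h
    have h1 : (i : ℕ) = n - 1 := by rw [← he i, h, hlast]
    exact absurd h1 (Nat.ne_of_lt i.isLt)
  have hsplit : ∀ f : Fin n → ℝ,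
      ∑ k, f k = (∑ i : Fin (n - 1), f (e i)) + f lastIdx := by
    intro f
    rw [← Finset.sum_erase_add Finset.univ f (Finset.mem_univ lastIdx)]
    congr 1
    have himg : Finset.univ.erase lastIdx = Finset.image e Finset.univ := by
      ext k
      simp only [Finset.mem_erase, Finset.mem_univ, and_true, Finset.mem_image,
        true_and]
      constructor
      · intro hk
        have hkle : (k : ℕ) ≤ n - 1 := Nat.le_sub_one_of_lt k.isLt
        have hklt : (k : ℕ) < n - 1 := by
          rcases lt_or_eq_of_le hkle with h | h
          · exact h
          · exact absurd (Fin.ext (h.trans hlast.symm)) hk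
        exact ⟨⟨(k : ℕ), hklt⟩, Fin.ext (he _)⟩
      · rintro ⟨i, rfl⟩
        exact he_ne i
    rw [himg, Finset.sum_image fun a _ b _ h => he_inj h]
  have hQde : ∀ d : Fin n, Qd d = ∑ k : Fin n, q k * Pmat d k := by
    intro d
    rw [hQd]
    rw [integral_finset_sum _ fun k _ =>
      ((hPint k).mono_set (hDsub d)).const_mul (q k)]
    exact Finset.sum_congr rfl fun k _ => by rw [integral_const_mul, hPmat]
  have hAq : ∀ j : Fin (n - 1),
      A.mulVec (fun k => q (e k)) j = Qd (e j) - Pmat (e j) lastIdx := by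
    intro j
    have hql : ∑ i : Fin (n - 1), q (e i) + q lastIdx = 1 := by
      rw [← hsplit q, hqsum]
    have hQsplit : Qd (e j) = (∑ k : Fin (n - 1), q (e k) * Pmat (e j) (e k))
        + q lastIdx * Pmat (e j) lastIdx := by
      rw [hQde (e j), hsplit (fun k => q k * Pmat (e j) k)]
    have : A.mulVec (fun k => q (e k)) j
        = ∑ k, (Pmat (e j) (e k) - Pmat (e j) lastIdx) * q (e k) := by
      simp only [Matrix.mulVec, dotProduct]
      exact Finset.sum_congr rfl fun k _ => by rw [hA]
    rw [this]
    have hexp : ∑ k, (Pmat (e j) (e k) - Pmat (e j) lastIdx) * q (e k)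
        = (∑ k : Fin (n - 1), q (e k) * Pmat (e j) (e k))
          - (∑ k : Fin (n - 1), q (e k)) * Pmat (e j) lastIdx := by
      rw [Finset.sum_mul, ← Finset.sum_sub_distrib]
      exact Finset.sum_congr rfl fun k _ => by ring
    rw [hexp]
    have h1 : ∑ k : Fin (n - 1), q (e k) * Pmat (e j) (e k)
        = Qd (e j) - q lastIdx * Pmat (e j) lastIdx := by linarith
    rw [h1]
    have h2 : ∑ k : Fin (n - 1), q (e k) = 1 - q lastIdx := by linarith
    rw [h2]; ring
  -- pointwise identity
  have hA1 : A⁻¹ * A = 1 :=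
    Matrix.nonsing_inv_mul A ((Matrix.isUnit_iff_isUnit_det A).mp hAinv)
  have hqbar : (fun k => q (e k))
      = A⁻¹.mulVec (fun j => Qd (e j) - Pmat (e j) lastIdx) := by
    have h : A.mulVec (fun k => q (e k))
        = (fun j => Qd (e j) - Pmat (e j) lastIdx) := funext hAq
    rw [← h, Matrix.mulVec_mulVec, hA1, Matrix.one_mulVec]
  have hptid : ∀ ω, (fun k => qhat ω k - q (e k))
      = A⁻¹.mulVec (fun j => Qhat (e j) ω - Qd (e j)) := by
    intro ω
    have hsub : (fun j => Qhat (e j) ω - Qd (e j))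
        = (fun j => Qhat (e j) ω - Pmat (e j) lastIdx)
          - (fun j => Qd (e j) - Pmat (e j) lastIdx) := by
      funext j; simp only [Pi.sub_apply]; ring
    rw [hsub, Matrix.mulVec_sub, ← hqhat ω, ← hqbar]
    rfl
  -- pointwise bound
  have hptbd : ∀ ω, ∑ k : Fin (n - 1), (qhat ω k - q (e k)) ^ 2
      ≤ ‖Matrix.toEuclideanCLM (𝕜 := ℝ) A⁻¹‖ ^ 2
        * ∑ j : Fin (n - 1), (Qhat (e j) ω - Qd (e j)) ^ 2 := by
    intro ω
    have := euclid_mulVec_bound A⁻¹ (fun j => Qhat (e j) ω - Qd (e j))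
    calc ∑ k : Fin (n - 1), (qhat ω k - q (e k)) ^ 2
        = ∑ k : Fin (n - 1),
          (A⁻¹.mulVec (fun j => Qhat (e j) ω - Qd (e j)) k) ^ 2 := by
          refine Finset.sum_congr rfl fun k _ => ?_
          rw [show qhat ω k - q (e k) = (fun k => qhat ω k - q (e k)) k from rfl,
            hptid ω]
      _ ≤ _ := this
  -- integrability of the majorant
  have hQhatmeas : ∀ d, Measurable (Qhat d) := by
    intro d
    have : Qhat d = fun ω => (∑ i, X d i ω) / S := by
      funext ω; rw [hQhat]
    rw [this]
    exact (Finset.measurable_sum _ fun i _ => hXmeas d i).div_const _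
  have hQhatbd : ∀ d ω, ‖Qhat d ω‖ ≤ 1 := by
    intro d ω
    rw [hQhat, norm_div, Real.norm_natCast,
      div_le_one (by exact_mod_cast hS : (0:ℝ) < (S:ℝ))]
    calc ‖∑ i, (D d).indicator (fun _ => (1:ℝ)) (R i ω)‖
        ≤ ∑ i, ‖(D d).indicator (fun _ => (1:ℝ)) (R i ω)‖ := norm_sum_le _ _
      _ ≤ ∑ _i : Fin S, (1:ℝ) := Finset.sum_le_sum fun i _ => hXbd d i ω
      _ = S := by simp
  have hvint : ∀ d : Fin n, Integrable (fun ω => (Qhat d ω - Qd d) ^ 2) μ := by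
    intro d
    refine (integrable_const ((1 + |Qd d|) ^ 2)).mono'
      (((hQhatmeas d).sub measurable_const).pow_const 2).aestronglyMeasurable
      (Filter.Eventually.of_forall fun ω => ?_)
    have h1 : ‖Qhat d ω - Qd d‖ ≤ 1 + |Qd d| := by
      calc ‖Qhat d ω - Qd d‖ ≤ ‖Qhat d ω‖ + ‖Qd d‖ := norm_sub_le _ _
        _ ≤ 1 + |Qd d| := add_le_add (hQhatbd d ω) (le_of_eq (Real.norm_eq_abs _))
    calc ‖(Qhat d ω - Qd d) ^ 2‖ = ‖Qhat d ω - Qd d‖ ^ 2 := by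
          rw [norm_pow]
      _ ≤ (1 + |Qd d|) ^ 2 := pow_le_pow_left₀ (norm_nonneg _) h1 2
  have hmajint : Integrable (fun ω => ‖Matrix.toEuclideanCLM (𝕜 := ℝ) A⁻¹‖ ^ 2
      * ∑ j : Fin (n - 1), (Qhat (e j) ω - Qd (e j)) ^ 2) μ :=
    (integrable_finset_sum _ fun j _ => hvint (e j)).const_mul _
  -- first inequality
  have hfirst : ∫ ω, (∑ k : Fin (n - 1), (qhat ω k - q (e k)) ^ 2) ∂μ ≤
      ‖Matrix.toEuclideanCLM (𝕜 := ℝ) A⁻¹‖ ^ 2 *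
        ((∑ j : Fin (n - 1), Qd (e j) * (1 - Qd (e j))) / S) := by
    calc ∫ ω, (∑ k : Fin (n - 1), (qhat ω k - q (e k)) ^ 2) ∂μ
        ≤ ∫ ω, (‖Matrix.toEuclideanCLM (𝕜 := ℝ) A⁻¹‖ ^ 2
            * ∑ j : Fin (n - 1), (Qhat (e j) ω - Qd (e j)) ^ 2) ∂μ := by
          refine integral_mono_of_nonneg (Filter.Eventually.of_forall fun ω => ?_)
            hmajint (Filter.Eventually.of_forall hptbd)
          exact Finset.sum_nonneg fun k _ => sq_nonneg _
      _ = ‖Matrix.toEuclideanCLM (𝕜 := ℝ) A⁻¹‖ ^ 2 *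
            ((∑ j : Fin (n - 1), Qd (e j) * (1 - Qd (e j))) / S) := by
          rw [integral_const_mul]
          congr 1
          rw [integral_finset_sum _ fun j _ => hvint (e j), Finset.sum_div]
          exact Finset.sum_congr rfl fun j _ => by rw [hvar (e j)]
  refine ⟨hfirst, hfirst.trans ?_⟩
  apply mul_le_mul_of_nonneg_left _ (sq_nonneg _)
  have hsum14 : (∑ j : Fin (n - 1), Qd (e j) * (1 - Qd (e j)))
      ≤ (n - 1 : ℝ) / 4 := by
    calc (∑ j : Fin (n - 1), Qd (e j) * (1 - Qd (e j)))
        ≤ ∑ _j : Fin (n - 1), (1 : ℝ) / 4 :=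
          Finset.sum_le_sum fun j _ => by nlinarith [sq_nonneg (Qd (e j) - 1/2)]
      _ = (n - 1 : ℝ) / 4 := by
          rw [Finset.sum_const, Finset.card_univ, Fintype.card_fin, nsmul_eq_mul]
          rw [Nat.cast_sub (by omega : 1 ≤ n), Nat.cast_one]
          ring
  rw [div_le_div_iff₀ (by positivity) (by positivity)]
  have hSpos : (0:ℝ) < S := by positivity
  nlinarith [hsum14]
end

section
/- Optimality is equivalent to maximizing the correct-classification mass: suppose each tie set 𝓔_j has Lebesgue measure zero. Then for every family of measurable sets D_1,…,D_n ⊆ Ω forming an admissible partition, Σ_{j=1}^n q_j ∫_{D_j} P_j(r) dr ≤ Σ_{j=1}^n q_j ∫_{D_j*} P_j(r) dr. -/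
open MeasureTheory

/-- Optimality is equivalent to maximizing the correct-classification
mass: if each tie set is Lebesgue-null, then for every admissible partition
`Σ_j q_j ∫_{D_j} P_j ≤ Σ_j q_j ∫_{D_j*} P_j`. -/
theorem optimal_domains_maximize_correct_mass
    (n m : ℕ) (hn : 2 ≤ n) (hm : 1 ≤ m)
    (Ω : Set (Fin m → ℝ)) (hΩ : MeasurableSet Ω)
    (P : Fin n → (Fin m → ℝ) → ℝ)
    (hPmeas : ∀ j, Measurable (P j))
    (hPnonneg : ∀ j r, 0 ≤ P j r)
    (hPsupp : ∀ j r, r ∉ Ω → P j r = 0)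
    (hPone : ∀ j, ∫ r in Ω, P j r = 1)
    (q : Fin n → ℝ) (hq : ∀ j, 0 ≤ q j) (hqsum : ∑ j, q j = 1)
    (Dstar : Fin n → Set (Fin m → ℝ))
    (hDstar : ∀ j, Dstar j =
      {r | r ∈ Ω ∧ ∀ k, k ≠ j → q k * P k r < q j * P j r})
    (E : Fin n → Set (Fin m → ℝ))
    (hE : ∀ j, E j = ⋃ (k : Fin n) (_ : k ≠ j),
      {r | r ∈ Ω ∧ q k * P k r = q j * P j r ∧ ∀ i, q i * P i r ≤ q j * P j r})
    (hEnull : ∀ j, volume (E j) = 0) :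
    ∀ D : Fin n → Set (Fin m → ℝ),
      (∀ j, MeasurableSet (D j)) →
      (∀ j, D j ⊆ Ω) →
      (∀ ℓ, ∫ r in ⋃ k, D k, P ℓ r = 1) →
      (∀ j k, j ≠ k → ∀ ℓ, ∫ r in D j ∩ D k, P ℓ r = 0) →
      ∑ j, q j * ∫ r in D j, P j r ≤ ∑ j, q j * ∫ r in Dstar j, P j r := by
  intro D hDmeas hDsub hDcover hDdisj
  haveI : Nonempty (Fin n) := ⟨⟨0, by omega⟩⟩
  have hne : (Finset.univ : Finset (Fin n)).Nonempty := Finset.univ_nonempty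
  set M : (Fin m → ℝ) → ℝ := fun r => Finset.univ.sup' hne (fun i => q i * P i r)
    with hMdef
  have hle : ∀ i r, q i * P i r ≤ M r := fun i r =>
    Finset.le_sup' (fun i => q i * P i r) (Finset.mem_univ i)
  have hMnonneg : ∀ r, 0 ≤ M r := fun r =>
    le_trans (mul_nonneg (hq (Classical.arbitrary _)) (hPnonneg _ r)) (hle _ r)
  have hMmeas : Measurable M := by
    have h1 : Measurable (Finset.univ.sup' hne (fun i => fun r => q i * P i r)) :=
      Finset.measurable_sup' hne (fun i _ => (hPmeas i).const_mul (q i))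
    have h2 : M = Finset.univ.sup' hne (fun i => fun r => q i * P i r) := by
      funext r
      rw [hMdef, Finset.sup'_apply]
    rw [h2]; exact h1
  -- integrability
  have hPint : ∀ ℓ, IntegrableOn (P ℓ) Ω := fun ℓ =>
    integrable_of_integral_eq_one (hPone ℓ)
  have hPintOn : ∀ ℓ (s : Set (Fin m → ℝ)), s ⊆ Ω → IntegrableOn (P ℓ) s :=
    fun ℓ s hs => (hPint ℓ).mono_set hs
  have hMint : IntegrableOn M Ω := by
    have hgint : IntegrableOn (fun r => ∑ i, q i * P i r) Ω := by
      apply integrable_finset_sum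
      intro i _
      exact ((hPint i).const_mul (q i))
    refine Integrable.mono hgint hMmeas.aestronglyMeasurable (ae_of_all _ fun r => ?_)
    rw [Real.norm_eq_abs, Real.norm_eq_abs, abs_of_nonneg (hMnonneg r),
      abs_of_nonneg (Finset.sum_nonneg fun i _ => mul_nonneg (hq i) (hPnonneg i r))]
    exact Finset.sup'_le _ _ fun i _ =>
      Finset.single_le_sum (fun i _ => mul_nonneg (hq i) (hPnonneg i r)) (Finset.mem_univ i)
  -- a.e. vanishing of each P ℓ on overlaps
  have hPne_meas : ∀ ℓ, MeasurableSet {r | ¬ P ℓ r = 0} :=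
    fun ℓ => (measurableSet_eq_fun (hPmeas ℓ) measurable_const).compl
  have hnullP : ∀ j k, j ≠ k → ∀ ℓ, volume ({r | ¬ P ℓ r = 0} ∩ (D j ∩ D k)) = 0 := by
    intro j k hjk ℓ
    have hint : IntegrableOn (P ℓ) (D j ∩ D k) :=
      hPintOn ℓ _ ((Set.inter_subset_left).trans (hDsub j))
    have h0 : P ℓ =ᵐ[volume.restrict (D j ∩ D k)] 0 :=
      (setIntegral_eq_zero_iff_of_nonneg_ae (ae_of_all _ fun r => hPnonneg ℓ r) hint).mp
        (hDdisj j k hjk ℓ)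
    have h1 : (volume.restrict (D j ∩ D k)) {r | ¬ P ℓ r = 0} = 0 := by
      have := Filter.eventuallyEq_iff_exists_mem.mp h0
      exact ae_iff.mp h0
    rwa [Measure.restrict_apply (hPne_meas ℓ)] at h1
  -- M vanishes a.e. on overlaps
  have hMne_meas : MeasurableSet {r | ¬ M r = 0} :=
    (measurableSet_eq_fun hMmeas measurable_const).compl
  have hMne_sub : {r | ¬ M r = 0} ⊆ ⋃ ℓ, {r | ¬ P ℓ r = 0} := by
    intro r hr
    obtain ⟨i, _, hi⟩ := Finset.exists_mem_eq_sup' hne (fun i => q i * P i r)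
    have : q i * P i r ≠ 0 := by rw [← hi]; exact hr
    have : P i r ≠ 0 := fun h => this (by rw [h, mul_zero])
    exact Set.mem_iUnion.mpr ⟨i, this⟩
  have hMnull : ∀ j k, j ≠ k → volume ({r | ¬ M r = 0} ∩ (D j ∩ D k)) = 0 := by
    intro j k hjk
    have hsub : {r | ¬ M r = 0} ∩ (D j ∩ D k)
        ⊆ ⋃ ℓ, {r | ¬ P ℓ r = 0} ∩ (D j ∩ D k) := by
      intro r ⟨hr1, hr2⟩
      obtain ⟨ℓ, hℓ⟩ := Set.mem_iUnion.mp (hMne_sub hr1)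
      exact Set.mem_iUnion.mpr ⟨ℓ, hℓ, hr2⟩
    exact measure_mono_null hsub (measure_iUnion_null fun ℓ => hnullP j k hjk ℓ)
  -- the disjointified family F
  set G : Fin n → Set (Fin m → ℝ) := fun j => ⋃ (k : Fin n) (_ : k < j), D k with hGdef
  have hGmeas : ∀ j, MeasurableSet (G j) := fun j =>
    MeasurableSet.iUnion fun k => MeasurableSet.iUnion fun _ => hDmeas k
  set F : Fin n → Set (Fin m → ℝ) := fun j => D j \ G j with hFdef
  have hFmeas : ∀ j, MeasurableSet (F j) := fun j => (hDmeas j).diff (hGmeas j)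
  have hFsub : ∀ j, F j ⊆ D j := fun j => Set.diff_subset
  have hFdisj : Pairwise (Function.onFun Disjoint F) := by
    have key : ∀ i j : Fin n, i < j → Disjoint (F i) (F j) := by
      intro i j hij
      refine Set.disjoint_left.mpr fun r hri hrj => hrj.2 ?_
      exact Set.mem_iUnion.mpr ⟨i, Set.mem_iUnion.mpr ⟨hij, hri.1⟩⟩
    intro i j hij
    rcases hij.lt_or_gt with h | h
    · exact key i j h
    · exact (key j i h).symm
  -- ∫_{D j} M = ∫_{F j} M
  have key1 : ∀ j, ∫ r in D j, M r = ∫ r in F j, M r := by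
    intro j
    have h1 := integral_inter_add_diff (s := D j) (t := G j) (μ := volume) (f := M)
      (hGmeas j) (hMint.mono_set (hDsub j))
    have hzero : volume ({r | ¬ M r = 0} ∩ (D j ∩ G j)) = 0 := by
      have hsub : {r | ¬ M r = 0} ∩ (D j ∩ G j)
          ⊆ ⋃ (k : Fin n) (_ : k < j), {r | ¬ M r = 0} ∩ (D j ∩ D k) := by
        rintro r ⟨hr1, hr2, hr3⟩
        obtain ⟨k, hk⟩ := Set.mem_iUnion.mp hr3
        obtain ⟨hklt, hrk⟩ := Set.mem_iUnion.mp hk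
        exact Set.mem_iUnion.mpr ⟨k, Set.mem_iUnion.mpr ⟨hklt, hr1, hr2, hrk⟩⟩
      exact measure_mono_null hsub
        (measure_iUnion_null fun k => measure_iUnion_null fun hk =>
          hMnull j k (ne_of_gt hk))
    have h2 : ∫ r in D j ∩ G j, M r = 0 := by
      apply integral_eq_zero_of_ae
      have hae : ∀ᵐ x ∂volume.restrict (D j ∩ G j), M x = 0 := by
        rw [ae_iff, Measure.restrict_apply hMne_meas]
        simpa using hzero
      exact hae
    rw [← h1, h2, zero_add]
  -- sum over F equals integral over union, bounded by ∫_Ω M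
  have hFint : ∀ j, IntegrableOn M (F j) :=
    fun j => hMint.mono_set ((hFsub j).trans (hDsub j))
  have key2 : ∑ j, ∫ r in F j, M r = ∫ r in ⋃ j, F j, M r :=
    (integral_iUnion_fintype hFmeas hFdisj hFint).symm
  have key3 : ∫ r in ⋃ j, F j, M r ≤ ∫ r in Ω, M r := by
    apply setIntegral_mono_set hMint (ae_of_all _ hMnonneg)
    exact HasSubset.Subset.eventuallyLE
      (Set.iUnion_subset fun j => (hFsub j).trans (hDsub j))
  -- properties of Dstar
  have hDstarSub : ∀ j, Dstar j ⊆ Ω := by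
    intro j; rw [hDstar j]; exact fun r hr => hr.1
  have hDstarMeas : ∀ j, MeasurableSet (Dstar j) := by
    intro j
    rw [hDstar j]
    have : {r | r ∈ Ω ∧ ∀ k, k ≠ j → q k * P k r < q j * P j r}
        = Ω ∩ ⋂ (k : Fin n) (_ : k ≠ j), {r | q k * P k r < q j * P j r} := by
      ext r
      simp [Set.mem_iInter]
    rw [this]
    exact hΩ.inter (MeasurableSet.iInter fun k => MeasurableSet.iInter fun _ =>
      measurableSet_lt ((hPmeas k).const_mul (q k)) ((hPmeas j).const_mul (q j)))
  have hDstarDisj : Pairwise (Function.onFun Disjoint Dstar) := by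
    intro i j hij
    refine Set.disjoint_left.mpr fun r hri hrj => ?_
    rw [hDstar i] at hri; rw [hDstar j] at hrj
    exact lt_asymm (hri.2 j (Ne.symm hij)) (hrj.2 i hij)
  -- Ω is a.e. equal to the union of the Dstar
  have hcover : Ω \ ⋃ j, Dstar j ⊆ ⋃ j, E j := by
    rintro r ⟨hrΩ, hr⟩
    obtain ⟨j, _, hj⟩ := Finset.exists_mem_eq_sup' hne (fun i => q i * P i r)
    have hjmax : ∀ i, q i * P i r ≤ q j * P j r := fun i => by
      rw [← hj]; exact hle i r
    have hrj : r ∉ Dstar j := fun h => hr (Set.mem_iUnion.mpr ⟨j, h⟩)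
    rw [hDstar j] at hrj
    simp only [Set.mem_setOf_eq] at hrj
    push_neg at hrj
    obtain ⟨k, hkj, hk⟩ := hrj hrΩ
    have hkeq : q k * P k r = q j * P j r := le_antisymm (hjmax k) hk
    refine Set.mem_iUnion.mpr ⟨j, ?_⟩
    rw [hE j]
    exact Set.mem_iUnion.mpr ⟨k, Set.mem_iUnion.mpr ⟨hkj, hrΩ, hkeq, hjmax⟩⟩
  have haeset : Ω =ᵐ[volume] ⋃ j, Dstar j := by
    rw [ae_eq_set]
    constructor
    · exact measure_mono_null hcover (measure_iUnion_null hEnull)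
    · rw [Set.diff_eq_empty.mpr (Set.iUnion_subset hDstarSub)]
      exact measure_empty
  have key4 : ∫ r in Ω, M r = ∑ j, ∫ r in Dstar j, M r := by
    rw [setIntegral_congr_set haeset]
    exact integral_iUnion_fintype hDstarMeas hDstarDisj
      (fun j => hMint.mono_set (hDstarSub j))
  have key5 : ∀ j, ∫ r in Dstar j, M r = q j * ∫ r in Dstar j, P j r := by
    intro j
    rw [← integral_const_mul]
    apply setIntegral_congr_fun (hDstarMeas j)
    intro r hr
    rw [hDstar j] at hr
    refine le_antisymm (Finset.sup'_le _ _ fun i _ => ?_) (hle j r)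
    by_cases h : i = j
    · rw [h]
    · exact (hr.2 i h).le
  -- assemble
  calc ∑ j, q j * ∫ r in D j, P j r
      ≤ ∑ j, ∫ r in D j, M r := by
        refine Finset.sum_le_sum fun j _ => ?_
        rw [← integral_const_mul]
        exact integral_mono ((hPintOn j _ (hDsub j)).const_mul (q j))
          (hMint.mono_set (hDsub j)) (fun r => hle j r)
    _ = ∑ j, ∫ r in F j, M r := by simp only [key1]
    _ = ∫ r in ⋃ j, F j, M r := key2
    _ ≤ ∫ r in Ω, M r := key3
    _ = ∑ j, ∫ r in Dstar j, M r := key4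
    _ = ∑ j, q j * ∫ r in Dstar j, P j r := by simp only [key5]
end
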